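/- Let B : ℝ³ → ℝ³ be a continuous magnetic field of medium decay, and let A(x) := −x × ∫₀¹ s·B(s·x) ds be the transversal gauge vector potential. Then curl A = B in the sense of tempered distributions: for every Schwartz function φ : ℝ³ → ℝ³, ∫_{ℝ³} A·(∇×φ) dx = ∫_{ℝ³} B·φ dx. -/

import Mathlib

open MeasureTheory Filter Topology
open SchwartzMap
open scoped ENNReal

noncomputable section

abbrev E3 := EuclideanSpace ℝ (Fin 3)

/-- Euclidean dot product on `ℝ³`. -/
def dot3 (a b : E3) : ℝ := @inner ℝ _ _ a b

/-- Cross product on `ℝ³`. -/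
def cross3 (a b : E3) : E3 :=
  WithLp.toLp 2 ![a 1 * b 2 - a 2 * b 1, a 2 * b 0 - a 0 * b 2, a 0 * b 1 - a 1 * b 0]

/-- `∂ᵢ fₖ (x)` for a map `f : ℝ³ → ℝ³`. -/
def pderiv3 (f : E3 → E3) (i k : Fin 3) (x : E3) : ℝ :=
  fderiv ℝ f x (EuclideanSpace.single i 1) k

/-- Pointwise (classical) curl of a map `ℝ³ → ℝ³`. -/
def curl3 (f : E3 → E3) (x : E3) : E3 :=
  WithLp.toLp 2 ![pderiv3 f 1 2 x - pderiv3 f 2 1 x,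
    pderiv3 f 2 0 x - pderiv3 f 0 2 x,
    pderiv3 f 0 1 x - pderiv3 f 1 0 x]

/-- The longitudinal component of `A` decays integrably:
`∫₀^∞ sup { |A(x)·x|/|x| : |x| ≥ r } dr < ∞`. -/
def LongitudinalIntegrableDecay (A : E3 → E3) : Prop :=
  (∫⁻ r in Set.Ioi (0:ℝ),
    ⨆ x ∈ {x : E3 | r ≤ ‖x‖}, ENNReal.ofReal (|dot3 (A x) x| / ‖x‖)) < ⊤

/-- A vector potential of medium range. -/
def IsMediumRange (A : E3 → E3) : Prop :=
  Continuous A ∧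
  (∃ C > (0:ℝ), ∃ μ : ℝ, 1/2 < μ ∧ ∃ R : ℝ, ∀ x : E3, R ≤ ‖x‖ → ‖A x‖ ≤ C * ‖x‖ ^ (-μ)) ∧
  LongitudinalIntegrableDecay A

/-- `div B = 0` in the sense of tempered distributions. -/
def DivFreeS' (B : E3 → E3) : Prop :=
  ∀ φ : SchwartzMap E3 ℝ, ∫ x, fderiv ℝ (⇑φ) x (B x) = 0

/-- A magnetic field of medium decay on `ℝ³`. -/
def IsMediumDecay (B : E3 → E3) : Prop :=
  (∃ p : ℝ, 3 < p ∧ MemLp B (ENNReal.ofReal p) volume) ∧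
  (∃ C > (0:ℝ), ∃ μ : ℝ, 3/2 < μ ∧ ∃ R : ℝ, ∀ x : E3, R ≤ ‖x‖ → ‖B x‖ ≤ C * ‖x‖ ^ (-μ)) ∧
  DivFreeS' B

/-- `curl A = B` in the sense of tempered distributions. -/
def CurlEqS' (A B : E3 → E3) : Prop :=
  ∀ φ : SchwartzMap E3 E3, (∫ x, dot3 (A x) (curl3 (⇑φ) x)) = ∫ x, dot3 (B x) (φ x)

/-- The transversal gauge vector potential. -/
def transversalGauge (B : E3 → E3) : E3 → E3 :=
  fun x => -cross3 x (∫ s in (0:ℝ)..1, s • B (s • x))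


-- === from t1.lean ===



lemma dot3_eq (a b : E3) : dot3 a b = a 0 * b 0 + a 1 * b 1 + a 2 * b 2 := by
  simp [dot3, PiLp.inner_apply, Fin.sum_univ_three, RCLike.inner_apply, mul_comm]

lemma cross3_apply0 (a b : E3) : cross3 a b 0 = a 1 * b 2 - a 2 * b 1 := rfl
lemma cross3_apply1 (a b : E3) : cross3 a b 1 = a 2 * b 0 - a 0 * b 2 := rfl
lemma cross3_apply2 (a b : E3) : cross3 a b 2 = a 0 * b 1 - a 1 * b 0 := rfl

-- -(x×v)·c = v·(x×c)
lemma dot3_neg_cross (x v c : E3) : dot3 (-cross3 x v) c = dot3 v (cross3 x c) := by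
  have h0 : (-cross3 x v : E3) 0 = -(cross3 x v 0) := rfl
  have h1 : (-cross3 x v : E3) 1 = -(cross3 x v 1) := rfl
  have h2 : (-cross3 x v : E3) 2 = -(cross3 x v 2) := rfl
  rw [dot3_eq, dot3_eq, h0, h1, h2, cross3_apply0, cross3_apply1, cross3_apply2,
    cross3_apply0, cross3_apply1, cross3_apply2]
  ring

lemma norm3_le (v : E3) : ‖v‖ ≤ |v 0| + |v 1| + |v 2| := by
  have h : ‖v‖ = Real.sqrt (v 0 ^ 2 + v 1 ^ 2 + v 2 ^ 2) := by
    rw [EuclideanSpace.norm_eq]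
    simp [Fin.sum_univ_three, Real.norm_eq_abs, sq_abs]
  rw [h]
  have : v 0 ^ 2 + v 1 ^ 2 + v 2 ^ 2 ≤ (|v 0| + |v 1| + |v 2|) ^ 2 := by
    have := abs_nonneg (v 0); have := abs_nonneg (v 1); have := abs_nonneg (v 2)
    nlinarith [sq_abs (v 0), sq_abs (v 1), sq_abs (v 2), mul_nonneg (abs_nonneg (v 0)) (abs_nonneg (v 1)), mul_nonneg (abs_nonneg (v 0)) (abs_nonneg (v 2)), mul_nonneg (abs_nonneg (v 1)) (abs_nonneg (v 2))]
  calc Real.sqrt (v 0 ^ 2 + v 1 ^ 2 + v 2 ^ 2) ≤ Real.sqrt ((|v 0| + |v 1| + |v 2|) ^ 2) := Real.sqrt_le_sqrt this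
    _ = |v 0| + |v 1| + |v 2| := by
        rw [Real.sqrt_sq (by positivity)]

lemma abs_apply_le_norm (v : E3) (i : Fin 3) : |v i| ≤ ‖v‖ := by
  have h : ‖v‖ = Real.sqrt (v 0 ^ 2 + v 1 ^ 2 + v 2 ^ 2) := by
    rw [EuclideanSpace.norm_eq]
    simp [Fin.sum_univ_three, Real.norm_eq_abs, sq_abs]
  rw [h]
  have h1 : |v i| = Real.sqrt (v i ^ 2) := by rw [Real.sqrt_sq_eq_abs]
  rw [h1]
  apply Real.sqrt_le_sqrt
  have : ∀ j, (0:ℝ) ≤ v j ^ 2 := fun j => sq_nonneg _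
  fin_cases i <;> simp [Fin.sum_univ_three] <;> nlinarith [sq_nonneg (v 0), sq_nonneg (v 1), sq_nonneg (v 2)]

lemma norm_cross3_le (a b : E3) : ‖cross3 a b‖ ≤ 6 * (‖a‖ * ‖b‖) := by
  have h := norm3_le (cross3 a b)
  rw [cross3_apply0, cross3_apply1, cross3_apply2] at h
  have hb : ∀ (i j : Fin 3), |a i * b j| ≤ ‖a‖ * ‖b‖ := fun i j => by
    rw [abs_mul]; exact mul_le_mul (abs_apply_le_norm a i) (abs_apply_le_norm b j) (abs_nonneg _) (norm_nonneg _)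
  have t0 := abs_sub (a 1 * b 2) (a 2 * b 1)
  calc ‖cross3 a b‖ ≤ _ := h
    _ ≤ 6 * (‖a‖ * ‖b‖) := by
      have := hb 1 2; have := hb 2 1; have := hb 2 0; have := hb 0 2; have := hb 0 1; have := hb 1 0
      have s0 : |a 1 * b 2 - a 2 * b 1| ≤ |a 1 * b 2| + |a 2 * b 1| := abs_sub _ _
      have s1 : |a 2 * b 0 - a 0 * b 2| ≤ |a 2 * b 0| + |a 0 * b 2| := abs_sub _ _
      have s2 : |a 0 * b 1 - a 1 * b 0| ≤ |a 0 * b 1| + |a 1 * b 0| := abs_sub _ _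
      linarith

-- === from t2.lean ===






lemma basis_expand (v : E3) : v = v 0 • EuclideanSpace.single (0:Fin 3) (1:ℝ)
    + v 1 • EuclideanSpace.single (1:Fin 3) (1:ℝ) + v 2 • EuclideanSpace.single (2:Fin 3) (1:ℝ) := by
  ext j
  have : ∀ (i : Fin 3) (r : ℝ), (r • EuclideanSpace.single i (1:ℝ)) j = r * (if j = i then 1 else 0) := by
    intro i r; simp [EuclideanSpace.single_apply]
  fin_cases j <;> simp [EuclideanSpace.single_apply]

lemma clm_apply_expand (L : E3 →L[ℝ] E3) (v : E3) (k : Fin 3) :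
    L v k = v 0 * L (EuclideanSpace.single (0:Fin 3) (1:ℝ)) k
      + v 1 * L (EuclideanSpace.single (1:Fin 3) (1:ℝ)) k
      + v 2 * L (EuclideanSpace.single (2:Fin 3) (1:ℝ)) k := by
  conv_lhs => rw [basis_expand v]
  rw [map_add, map_add, _root_.map_smul, _root_.map_smul, _root_.map_smul]
  rfl

lemma dot3_cross_curl (φ : E3 → E3) (x b : E3) :
    dot3 b (cross3 x (curl3 φ x))
      = dot3 (fderiv ℝ φ x b) x - dot3 b (fderiv ℝ φ x x) := by
  have hb := fun k => clm_apply_expand (fderiv ℝ φ x) b k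
  have hx := fun k => clm_apply_expand (fderiv ℝ φ x) x k
  rw [dot3_eq, dot3_eq, dot3_eq, hb 0, hb 1, hb 2, hx 0, hx 1, hx 2]
  show b 0 * (x 1 * curl3 φ x 2 - x 2 * curl3 φ x 1) + b 1 * (x 2 * curl3 φ x 0 - x 0 * curl3 φ x 2)
      + b 2 * (x 0 * curl3 φ x 1 - x 1 * curl3 φ x 0) = _
  show b 0 * (x 1 * (pderiv3 φ 0 1 x - pderiv3 φ 1 0 x) - x 2 * (pderiv3 φ 2 0 x - pderiv3 φ 0 2 x))
      + b 1 * (x 2 * (pderiv3 φ 1 2 x - pderiv3 φ 2 1 x) - x 0 * (pderiv3 φ 0 1 x - pderiv3 φ 1 0 x))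
      + b 2 * (x 0 * (pderiv3 φ 2 0 x - pderiv3 φ 0 2 x) - x 1 * (pderiv3 φ 1 2 x - pderiv3 φ 2 1 x)) = _
  unfold pderiv3
  ring

-- === from t3.lean ===



/-- x ↦ ⟪φ x, x⟫ as a Schwartz function. -/
def hS (φ : SchwartzMap E3 E3) : SchwartzMap E3 ℝ :=
  SchwartzMap.bilinLeftCLM (innerSL ℝ : E3 →L[ℝ] E3 →L[ℝ] ℝ)
    ((ContinuousLinearMap.id ℝ E3).hasTemperateGrowth) φ

lemma hS_apply (φ : SchwartzMap E3 E3) (x : E3) : hS φ x = dot3 (φ x) x := rfl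

lemma fderiv_hS (φ : SchwartzMap E3 E3) (x b : E3) :
    fderiv ℝ (⇑(hS φ)) x b = dot3 (φ x) b + dot3 (fderiv ℝ (⇑φ) x b) x := by
  have hφ : HasFDerivAt (⇑φ) (fderiv ℝ (⇑φ) x) x :=
    (φ.differentiable.differentiableAt).hasFDerivAt
  have hid : HasFDerivAt (fun y : E3 => y) (ContinuousLinearMap.id ℝ E3) x := hasFDerivAt_id x
  have h := (hφ.inner ℝ hid)
  have h2 : fderiv ℝ (fun y => (inner ℝ (φ y) y : ℝ)) x =
      ((fderivInnerCLM ℝ ((φ x), x)).comp ((fderiv ℝ (⇑φ) x).prod (ContinuousLinearMap.id ℝ E3))) :=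
    h.fderiv
  have h3 : (⇑(hS φ) : E3 → ℝ) = fun y => (inner ℝ (φ y) y : ℝ) := rfl
  rw [h3, h2]
  simp only [ContinuousLinearMap.comp_apply, ContinuousLinearMap.prod_apply,
    fderivInnerCLM_apply, ContinuousLinearMap.coe_id', id_eq, dot3]
  try ring

/-- scaling equiv -/
def scaleE (s : ℝ) (hs : s ≠ 0) : E3 ≃L[ℝ] E3 :=
  (LinearEquiv.smulOfNeZero ℝ E3 s hs).toContinuousLinearEquiv

lemma scaleE_apply (s : ℝ) (hs : s ≠ 0) (x : E3) : scaleE s hs x = s • x := rfl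

lemma divfree_scaled {B : E3 → E3} (hdiv : DivFreeS' B) (h : SchwartzMap E3 ℝ)
    {s : ℝ} (hs : s ≠ 0) :
    ∫ x, fderiv ℝ (⇑h) x (B (s • x)) = 0 := by
  set e := scaleE s⁻¹ (inv_ne_zero hs)
  set ψ : SchwartzMap E3 ℝ := SchwartzMap.compCLMOfContinuousLinearEquiv ℝ e h
  have hψ : ∀ y, ψ y = h (s⁻¹ • y) := fun y => rfl
  have hfd : ∀ y, fderiv ℝ (⇑ψ) y = (fderiv ℝ (⇑h) (s⁻¹ • y)).comp (e : E3 →L[ℝ] E3) := by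
    intro y
    have : (⇑ψ : E3 → ℝ) = (⇑h) ∘ (⇑e) := rfl
    rw [this, fderiv_comp y (h.differentiable.differentiableAt) (e.differentiableAt)]
    rw [e.fderiv]
    rfl
  have h0 : ∫ y, fderiv ℝ (⇑ψ) y (B y) = 0 := hdiv ψ
  have h1 : ∫ y, (s⁻¹ * fderiv ℝ (⇑h) (s⁻¹ • y) (B y)) = 0 := by
    rw [← h0]
    congr 1; funext y
    rw [hfd y]
    simp [ContinuousLinearMap.comp_apply, scaleE_apply, e, _root_.map_smul]
  have h2 : ∫ y, fderiv ℝ (⇑h) (s⁻¹ • y) (B y) = 0 := by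
    have heq : ∫ (y : E3), s⁻¹ * (fderiv ℝ (⇑h) (s⁻¹ • y)) (B y)
        = s⁻¹ * ∫ (y : E3), (fderiv ℝ (⇑h) (s⁻¹ • y)) (B y) :=
      integral_const_mul s⁻¹ _
    rw [heq, mul_eq_zero] at h1
    rcases h1 with h1 | h1
    · exact absurd h1 (inv_ne_zero hs)
    · exact h1
  have h3 : ∫ x, (fun y => fderiv ℝ (⇑h) (s⁻¹ • y) (B y)) (s • x) = 0 := by
    rw [MeasureTheory.Measure.integral_comp_smul volume
      (fun y => fderiv ℝ (⇑h) (s⁻¹ • y) (B y)) s, h2, smul_zero]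
  rw [← h3]
  congr 1; funext x
  simp [inv_smul_smul₀ hs]

-- === from t4.lean ===

lemma bounded_of_decay {B : E3 → E3} (hBc : Continuous B)
    (hdec : ∃ C > (0:ℝ), ∃ μ : ℝ, 3/2 < μ ∧ ∃ R : ℝ, ∀ x : E3, R ≤ ‖x‖ → ‖B x‖ ≤ C * ‖x‖ ^ (-μ)) :
    ∃ M > (0:ℝ), ∀ x, ‖B x‖ ≤ M := by
  obtain ⟨C, hC, μ, hμ, R, hR⟩ := hdec
  set R' := max R 1 with hR'
  obtain ⟨M₁, hM₁⟩ := (isCompact_closedBall (0:E3) R').exists_bound_of_continuousOn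
    hBc.continuousOn
  refine ⟨max M₁ C + 1, by positivity, fun x => ?_⟩
  rcases le_or_gt ‖x‖ R' with hx | hx
  · have := hM₁ x (by simpa [Metric.mem_closedBall, dist_zero_right] using hx)
    calc ‖B x‖ ≤ M₁ := this
      _ ≤ max M₁ C + 1 := by
        have := le_max_left M₁ C; linarith
  · have hx1 : (1:ℝ) ≤ ‖x‖ := le_trans (le_max_right R 1) hx.le
    have hxR : R ≤ ‖x‖ := le_trans (le_max_left R 1) hx.le
    have h1 : ‖x‖ ^ (-μ) ≤ 1 := by
      apply Real.rpow_le_one_of_one_le_of_nonpos hx1; linarith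
    calc ‖B x‖ ≤ C * ‖x‖ ^ (-μ) := hR x hxR
      _ ≤ C * 1 := by nlinarith
      _ ≤ max M₁ C + 1 := by have := le_max_right M₁ C; linarith

/-- decay bound with exponent 5 for a Schwartz function -/
lemma schwartz_decay5 {V : Type*} [NormedAddCommGroup V] [NormedSpace ℝ V]
    (f : SchwartzMap E3 V) :
    ∃ C > (0:ℝ), ∀ x, ‖f x‖ ≤ C * (1 + ‖x‖) ^ (-(5:ℝ)) := by
  have h := fun x => SchwartzMap.one_add_le_sup_seminorm_apply (𝕜 := ℝ) (m := (5,0))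
    (k := 5) (n := 0) le_rfl le_rfl f x
  set C := 2 ^ (5:ℕ) * ((Finset.Iic ((5:ℕ),(0:ℕ))).sup (fun m => SchwartzMap.seminorm ℝ m.1 m.2) f : ℝ)
  refine ⟨C + 1, by positivity, fun x => ?_⟩
  have h1 : (1 + ‖x‖) ^ (5:ℕ) * ‖f x‖ ≤ C := by
    simpa [norm_iteratedFDeriv_zero] using h x
  have hpos : (0:ℝ) < (1 + ‖x‖) ^ (5:ℕ) := by positivity
  have h2 : ‖f x‖ ≤ C / (1 + ‖x‖) ^ (5:ℕ) := by
    rw [le_div_iff₀ hpos]; linarith [h1]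
  have h3 : (1 + ‖x‖ : ℝ) ^ (-(5:ℝ)) = ((1 + ‖x‖) ^ (5:ℕ))⁻¹ := by
    rw [← Real.rpow_natCast (1 + ‖x‖) 5, ← Real.rpow_neg (by positivity)]
    norm_num
  rw [h3]
  have hC0 : 0 ≤ C := le_trans (by positivity) h1
  calc ‖f x‖ ≤ C / (1 + ‖x‖) ^ (5:ℕ) := h2
    _ = C * ((1 + ‖x‖) ^ (5:ℕ))⁻¹ := div_eq_mul_inv _ _
    _ ≤ (C+1) * ((1 + ‖x‖) ^ (5:ℕ))⁻¹ := by
        have : (0:ℝ) ≤ ((1 + ‖x‖) ^ (5:ℕ))⁻¹ := by positivity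
        nlinarith

-- === from t5.lean ===


lemma abs_dot3_le (a b : E3) : |dot3 a b| ≤ ‖a‖ * ‖b‖ := abs_real_inner_le_norm a b

section core
variable {B : E3 → E3} {M : ℝ} (φ : SchwartzMap E3 E3)

def Kf (B : E3 → E3) (φ : SchwartzMap E3 E3) (s : ℝ) : ℝ := ∫ x, dot3 (B (s • x)) (φ x)
def Lf (B : E3 → E3) (φ : SchwartzMap E3 E3) (s : ℝ) : ℝ :=
  ∫ x, dot3 (B (s • x)) (fderiv ℝ (⇑φ) x x)

lemma cont_fderiv_phi : Continuous fun x => fderiv ℝ (⇑φ) x := by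
  have : (fun x => fderiv ℝ (⇑φ) x) = ⇑(SchwartzMap.fderivCLM ℝ E3 E3 φ) := by
    funext x; exact (SchwartzMap.fderivCLM_apply ℝ φ x).symm
  rw [this]; exact (SchwartzMap.fderivCLM ℝ E3 E3 φ).continuous

lemma cont_fderiv_apply_self : Continuous fun x : E3 => fderiv ℝ (⇑φ) x x :=
  (cont_fderiv_phi φ).clm_apply continuous_id

lemma cont_Bsx (hBc : Continuous B) (s : ℝ) : Continuous fun x : E3 => B (s • x) :=
  hBc.comp (continuous_id.const_smul s)

lemma integrable_K_integrand (hBc : Continuous B) (hM : ∀ x, ‖B x‖ ≤ M) (s : ℝ) :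
    Integrable (fun x => dot3 (B (s • x)) (φ x)) volume := by
  refine Integrable.mono' ((φ.integrable (μ := volume)).norm.const_mul M)
    ?_ (Eventually.of_forall fun x => ?_)
  · exact (Continuous.inner (cont_Bsx hBc s) φ.continuous).aestronglyMeasurable
  · have h := abs_dot3_le (B (s • x)) (φ x)
    have := hM (s • x)
    calc ‖dot3 (B (s • x)) (φ x)‖ = |dot3 (B (s • x)) (φ x)| := rfl
      _ ≤ ‖B (s • x)‖ * ‖φ x‖ := h
      _ ≤ M * ‖φ x‖ := by nlinarith [norm_nonneg (φ x), norm_nonneg (B (s • x))]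

lemma integrable_L_integrand (hBc : Continuous B) (hM : ∀ x, ‖B x‖ ≤ M) (s : ℝ) :
    Integrable (fun x => dot3 (B (s • x)) (fderiv ℝ (⇑φ) x x)) volume := by
  have hint : Integrable (fun x : E3 => M * (‖x‖ ^ 1 * ‖SchwartzMap.fderivCLM ℝ E3 E3 φ x‖)) volume :=
    ((SchwartzMap.fderivCLM ℝ E3 E3 φ).integrable_pow_mul (μ := volume) 1).const_mul M
  refine Integrable.mono' hint
    ?_ (Eventually.of_forall fun x => ?_)
  · exact (Continuous.inner (cont_Bsx hBc s) (cont_fderiv_apply_self φ)).aestronglyMeasurable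
  · have h := abs_dot3_le (B (s • x)) (fderiv ℝ (⇑φ) x x)
    have hM' := hM (s • x)
    have hop : ‖fderiv ℝ (⇑φ) x x‖ ≤ ‖fderiv ℝ (⇑φ) x‖ * ‖x‖ :=
      (fderiv ℝ (⇑φ) x).le_opNorm x
    have hB0 : (0:ℝ) ≤ ‖B (s•x)‖ := norm_nonneg _
    have hM0 : (0:ℝ) ≤ M := le_trans hB0 hM'
    calc ‖dot3 (B (s • x)) (fderiv ℝ (⇑φ) x x)‖
        ≤ ‖B (s • x)‖ * ‖fderiv ℝ (⇑φ) x x‖ := h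
      _ ≤ M * (‖fderiv ℝ (⇑φ) x‖ * ‖x‖) := by nlinarith [norm_nonneg (fderiv ℝ (⇑φ) x x), mul_nonneg (norm_nonneg (fderiv ℝ (⇑φ) x)) (norm_nonneg x)]
      _ = M * (‖x‖ ^ 1 * ‖SchwartzMap.fderivCLM ℝ E3 E3 φ x‖) := by
          rw [SchwartzMap.fderivCLM_apply]; ring

lemma cont_K (hBc : Continuous B) (hM : ∀ x, ‖B x‖ ≤ M) : Continuous (Kf B φ) := by
  refine continuous_of_dominated (bound := fun x => M * ‖φ x‖)
    (fun s => (Continuous.inner (cont_Bsx hBc s) φ.continuous).aestronglyMeasurable)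
    (fun s => Eventually.of_forall fun x => ?_)
    ((φ.integrable (μ := volume)).norm.const_mul M)
    (Eventually.of_forall fun x => ?_)
  · have h := abs_dot3_le (B (s • x)) (φ x)
    have := hM (s • x)
    calc ‖dot3 (B (s • x)) (φ x)‖ ≤ ‖B (s • x)‖ * ‖φ x‖ := h
      _ ≤ M * ‖φ x‖ := by nlinarith [norm_nonneg (φ x), norm_nonneg (B (s • x))]
  · exact Continuous.inner (hBc.comp (continuous_id.smul continuous_const)) continuous_const

lemma cont_L (hBc : Continuous B) (hM : ∀ x, ‖B x‖ ≤ M) : Continuous (Lf B φ) := by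
  refine continuous_of_dominated (bound := fun x => M * (‖x‖ ^ 1 * ‖SchwartzMap.fderivCLM ℝ E3 E3 φ x‖))
    (fun s => (Continuous.inner (cont_Bsx hBc s) (cont_fderiv_apply_self φ)).aestronglyMeasurable)
    (fun s => Eventually.of_forall fun x => ?_)
    (((SchwartzMap.fderivCLM ℝ E3 E3 φ).integrable_pow_mul (μ := volume) 1).const_mul M)
    (Eventually.of_forall fun x => ?_)
  · have h := abs_dot3_le (B (s • x)) (fderiv ℝ (⇑φ) x x)
    have hM' := hM (s • x)
    have hop : ‖fderiv ℝ (⇑φ) x x‖ ≤ ‖fderiv ℝ (⇑φ) x‖ * ‖x‖ :=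
      (fderiv ℝ (⇑φ) x).le_opNorm x
    have hB0 : (0:ℝ) ≤ ‖B (s•x)‖ := norm_nonneg _
    have hM0 : (0:ℝ) ≤ M := le_trans hB0 hM'
    calc ‖dot3 (B (s • x)) (fderiv ℝ (⇑φ) x x)‖
        ≤ ‖B (s • x)‖ * ‖fderiv ℝ (⇑φ) x x‖ := h
      _ ≤ M * (‖fderiv ℝ (⇑φ) x‖ * ‖x‖) := by nlinarith [norm_nonneg (fderiv ℝ (⇑φ) x x), mul_nonneg (norm_nonneg (fderiv ℝ (⇑φ) x)) (norm_nonneg x)]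
      _ = M * (‖x‖ ^ 1 * ‖SchwartzMap.fderivCLM ℝ E3 E3 φ x‖) := by
          rw [SchwartzMap.fderivCLM_apply]; ring
  · exact Continuous.inner (hBc.comp (continuous_id.smul continuous_const)) continuous_const

end core

-- === per-s identity ===
section core2
variable {B : E3 → E3} {M : ℝ} (φ : SchwartzMap E3 E3)

lemma cont_fderiv_hS : Continuous fun x => fderiv ℝ (⇑(hS φ)) x := by
  have : (fun x => fderiv ℝ (⇑(hS φ)) x) = ⇑(SchwartzMap.fderivCLM ℝ E3 ℝ (hS φ)) := by
    funext x; exact (SchwartzMap.fderivCLM_apply ℝ (hS φ) x).symm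
  rw [this]; exact (SchwartzMap.fderivCLM ℝ E3 ℝ (hS φ)).continuous

lemma integrable_hS_integrand (hBc : Continuous B) (hM : ∀ x, ‖B x‖ ≤ M) (s : ℝ) :
    Integrable (fun x => fderiv ℝ (⇑(hS φ)) x (B (s • x))) volume := by
  have hint : Integrable (fun x : E3 => M * ‖SchwartzMap.fderivCLM ℝ E3 ℝ (hS φ) x‖) volume :=
    ((SchwartzMap.fderivCLM ℝ E3 ℝ (hS φ)).integrable (μ := volume)).norm.const_mul M
  refine Integrable.mono' hint
    (((cont_fderiv_hS φ).clm_apply (cont_Bsx hBc s)).aestronglyMeasurable)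
    (Eventually.of_forall fun x => ?_)
  have hop : ‖fderiv ℝ (⇑(hS φ)) x (B (s • x))‖ ≤ ‖fderiv ℝ (⇑(hS φ)) x‖ * ‖B (s • x)‖ :=
    (fderiv ℝ (⇑(hS φ)) x).le_opNorm _
  have hM' := hM (s • x)
  have h0 : (0:ℝ) ≤ ‖fderiv ℝ (⇑(hS φ)) x‖ := norm_nonneg _
  calc ‖fderiv ℝ (⇑(hS φ)) x (B (s • x))‖ ≤ ‖fderiv ℝ (⇑(hS φ)) x‖ * ‖B (s • x)‖ := hop
    _ ≤ M * ‖SchwartzMap.fderivCLM ℝ E3 ℝ (hS φ) x‖ := by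
        rw [SchwartzMap.fderivCLM_apply]
        nlinarith [norm_nonneg (B (s • x))]

lemma inner_int (hBc : Continuous B) (hM : ∀ x, ‖B x‖ ≤ M) (hdiv : DivFreeS' B)
    {s : ℝ} (hs : s ≠ 0) :
    ∫ x, dot3 (B (s • x)) (cross3 x (curl3 (⇑φ) x)) = -(Kf B φ s) - Lf B φ s := by
  have hptw : ∀ x, dot3 (B (s • x)) (cross3 x (curl3 (⇑φ) x))
      = fderiv ℝ (⇑(hS φ)) x (B (s • x)) - dot3 (B (s • x)) (φ x)
        - dot3 (B (s • x)) (fderiv ℝ (⇑φ) x x) := by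
    intro x
    rw [dot3_cross_curl (⇑φ) x (B (s • x)), fderiv_hS φ x (B (s • x))]
    have hsymm : dot3 (φ x) (B (s • x)) = dot3 (B (s • x)) (φ x) := real_inner_comm _ _
    rw [hsymm]; ring
  have i1 := integrable_hS_integrand φ hBc hM s
  have i2 := integrable_K_integrand φ hBc hM s
  have i3 := integrable_L_integrand φ hBc hM s
  calc ∫ x, dot3 (B (s • x)) (cross3 x (curl3 (⇑φ) x))
      = ∫ x, (fderiv ℝ (⇑(hS φ)) x (B (s • x)) - dot3 (B (s • x)) (φ x)
          - dot3 (B (s • x)) (fderiv ℝ (⇑φ) x x)) := by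
        congr 1; funext x; exact hptw x
    _ = (∫ x, (fderiv ℝ (⇑(hS φ)) x (B (s • x)) - dot3 (B (s • x)) (φ x)))
          - ∫ x, dot3 (B (s • x)) (fderiv ℝ (⇑φ) x x) := integral_sub (i1.sub i2) i3
    _ = (∫ x, fderiv ℝ (⇑(hS φ)) x (B (s • x))) - (∫ x, dot3 (B (s • x)) (φ x))
          - ∫ x, dot3 (B (s • x)) (fderiv ℝ (⇑φ) x x) := by rw [integral_sub i1 i2]
    _ = 0 - Kf B φ s - Lf B φ s := by rw [divfree_scaled hdiv (hS φ) hs]; rfl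
    _ = -(Kf B φ s) - Lf B φ s := by ring

end core2

-- === from t6 ===
set_option maxHeartbeats 1000000
section deriv
variable {B : E3 → E3} {M : ℝ} (φ : SchwartzMap E3 E3)

def Jf (B : E3 → E3) (φ : SchwartzMap E3 E3) (s : ℝ) : ℝ := ∫ y, dot3 (B y) (φ (s⁻¹ • y))

lemma finrankE3 : Module.finrank ℝ E3 = 3 := finrank_euclideanSpace_fin

lemma K_eq_J {s : ℝ} (hs : 0 < s) : Kf B φ s = (s ^ 3)⁻¹ * Jf B φ s := by
  have h := MeasureTheory.Measure.integral_comp_smul volume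
    (fun y => dot3 (B y) (φ (s⁻¹ • y))) s
  rw [finrankE3] at h
  have h2 : (fun x : E3 => dot3 (B (s • x)) (φ (s⁻¹ • s • x))) = fun x => dot3 (B (s • x)) (φ x) := by
    funext x; rw [inv_smul_smul₀ hs.ne']
  unfold Kf Jf
  rw [← h2]
  rw [show (∫ x : E3, dot3 (B (s • x)) (φ (s⁻¹ • s • x)))
      = ∫ x : E3, (fun y => dot3 (B y) (φ (s⁻¹ • y))) (s • x) from rfl, h]
  rw [abs_of_nonneg (by positivity), smul_eq_mul]

lemma Ltilde_eq {s : ℝ} (hs : 0 < s) :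
    ∫ y, dot3 (B y) (fderiv ℝ (⇑φ) (s⁻¹ • y) y) = s ^ 4 * Lf B φ s := by
  have h := MeasureTheory.Measure.integral_comp_smul volume
    (fun y => dot3 (B y) (fderiv ℝ (⇑φ) (s⁻¹ • y) y)) s
  rw [finrankE3] at h
  have h2 : (fun x : E3 => (fun y => dot3 (B y) (fderiv ℝ (⇑φ) (s⁻¹ • y) y)) (s • x))
      = fun x => s * dot3 (B (s • x)) (fderiv ℝ (⇑φ) x x) := by
    funext x
    simp only
    rw [inv_smul_smul₀ hs.ne', _root_.map_smul, dot3, dot3, real_inner_smul_right]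
  rw [h2] at h
  rw [integral_const_mul] at h
  have hLf : (∫ x, dot3 (B (s • x)) (fderiv ℝ (⇑φ) x x)) = Lf B φ s := rfl
  rw [hLf, abs_of_nonneg (by positivity), smul_eq_mul] at h
  have hs3 : (0:ℝ) < s ^ 3 := by positivity
  field_simp at h ⊢
  nlinarith [h]

lemma hasDerivAt_J (hBc : Continuous B) (hM : ∀ x, ‖B x‖ ≤ M) (hM0 : 0 < M)
    {s₀ : ℝ} (hs₀ : 0 < s₀) :
    HasDerivAt (Jf B φ) (-(s₀ ^ 2) * Lf B φ s₀) s₀ := by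
  classical
  set Φ : SchwartzMap E3 (E3 →L[ℝ] E3) := SchwartzMap.fderivCLM ℝ E3 E3 φ with hΦ
  obtain ⟨C, hC, hCb⟩ := schwartz_decay5 Φ
  set m : ℝ := min 1 (2 / (3 * s₀)) with hm
  have hm0 : 0 < m := by
    apply lt_min one_pos; positivity
  set bound : E3 → ℝ :=
    fun y => M * (2 / s₀) ^ 2 * (m ^ (-(5:ℝ)) * C) * ((1 + ‖y‖) ^ (-(5:ℝ)) * ‖y‖) with hbound
  have key := hasDerivAt_integral_of_dominated_loc_of_deriv_le
    (F := fun s y => dot3 (B y) (φ (s⁻¹ • y)))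
    (F' := fun s y => dot3 (B y) ((-(s ^ 2)⁻¹) • fderiv ℝ (⇑φ) (s⁻¹ • y) y))
    (x₀ := s₀) (s := Metric.ball s₀ (s₀ / 2)) (bound := bound) (μ := volume) (Metric.ball_mem_nhds _ (by positivity))
    ?_ ?_ ?_ ?_ ?_ ?_
  · obtain ⟨-, hd⟩ := key
    have : (∫ y, dot3 (B y) ((-(s₀ ^ 2)⁻¹) • fderiv ℝ (⇑φ) (s₀⁻¹ • y) y))
        = -(s₀ ^ 2) * Lf B φ s₀ := by
      have h1 : (fun y => dot3 (B y) ((-(s₀ ^ 2)⁻¹) • fderiv ℝ (⇑φ) (s₀⁻¹ • y) y))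
          = fun y => (-(s₀ ^ 2)⁻¹) * dot3 (B y) (fderiv ℝ (⇑φ) (s₀⁻¹ • y) y) := by
        funext y; rw [dot3, dot3, real_inner_smul_right]
      rw [h1, integral_const_mul, Ltilde_eq φ hs₀]
      field_simp
    rwa [this] at hd
  · -- measurability of F s
    refine Eventually.of_forall fun s => ?_
    exact (Continuous.inner hBc (φ.continuous.comp (continuous_id.const_smul s⁻¹))).aestronglyMeasurable
  · -- integrability of F s₀
    have hφi : Integrable (fun y : E3 => φ (s₀⁻¹ • y)) volume := by
      have := (MeasureTheory.integrable_comp_smul_iff volume (fun y : E3 => φ y)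
        (inv_ne_zero hs₀.ne')).mpr (φ.integrable (μ := volume))
      exact this
    refine Integrable.mono' (hφi.norm.const_mul M)
      (Continuous.inner hBc (φ.continuous.comp (continuous_id.const_smul s₀⁻¹))).aestronglyMeasurable
      (Eventually.of_forall fun y => ?_)
    have h := abs_dot3_le (B y) (φ (s₀⁻¹ • y))
    have := hM y
    calc ‖dot3 (B y) (φ (s₀⁻¹ • y))‖ ≤ ‖B y‖ * ‖φ (s₀⁻¹ • y)‖ := h
      _ ≤ M * ‖φ (s₀⁻¹ • y)‖ := by nlinarith [norm_nonneg (φ (s₀⁻¹ • y)), norm_nonneg (B y)]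
  · -- measurability of F' s₀
    refine (Continuous.inner hBc ?_).aestronglyMeasurable
    exact (continuous_const (y := (-(s₀ ^ 2)⁻¹ : ℝ))).smul (((cont_fderiv_phi φ).comp (continuous_id.const_smul s₀⁻¹)).clm_apply continuous_id)
  · -- bound
    refine Eventually.of_forall fun y => fun s hsball => ?_
    have hsd : |s - s₀| < s₀ / 2 := by
      rw [Metric.mem_ball, Real.dist_eq] at hsball; exact hsball
    have hs1 : s₀ / 2 < s := by cases' abs_lt.mp hsd with h1 h2; linarith
    have hs2 : s < 3 * s₀ / 2 := by cases' abs_lt.mp hsd with h1 h2; linarith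
    have hspos : 0 < s := lt_trans (by positivity) hs1
    -- ‖F' s y‖ ≤ M * (s²)⁻¹ * ‖fderiv φ (s⁻¹ y)‖ * ‖y‖
    have hinner := abs_dot3_le (B y) ((-(s ^ 2)⁻¹) • fderiv ℝ (⇑φ) (s⁻¹ • y) y)
    have hnorm_smul : ‖(-(s ^ 2)⁻¹) • fderiv ℝ (⇑φ) (s⁻¹ • y) y‖
        = (s ^ 2)⁻¹ * ‖fderiv ℝ (⇑φ) (s⁻¹ • y) y‖ := by
      rw [norm_smul]
      congr 1
      rw [Real.norm_eq_abs, abs_neg, abs_inv, abs_of_nonneg (by positivity)]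
    have hop : ‖fderiv ℝ (⇑φ) (s⁻¹ • y) y‖ ≤ ‖fderiv ℝ (⇑φ) (s⁻¹ • y)‖ * ‖y‖ :=
      (fderiv ℝ (⇑φ) (s⁻¹ • y)).le_opNorm y
    have hΦb : ‖fderiv ℝ (⇑φ) (s⁻¹ • y)‖ ≤ C * (1 + ‖s⁻¹ • y‖) ^ (-(5:ℝ)) := by
      have := hCb (s⁻¹ • y)
      rwa [hΦ, SchwartzMap.fderivCLM_apply] at this
    -- (1 + ‖s⁻¹ • y‖) ≥ m * (1 + ‖y‖)
    have hmball : m * (1 + ‖y‖) ≤ 1 + ‖s⁻¹ • y‖ := by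
      rw [norm_smul, Real.norm_eq_abs, abs_inv, abs_of_nonneg hspos.le]
      have h1 : s⁻¹ ≥ (3 * s₀ / 2)⁻¹ := by
        apply inv_anti₀ (by positivity) hs2.le
      have h2 : (3 * s₀ / 2)⁻¹ = 2 / (3 * s₀) := by field_simp
      have hy0 : (0:ℝ) ≤ ‖y‖ := norm_nonneg _
      have hmle1 : m ≤ 1 := min_le_left _ _
      have hmle2 : m ≤ 2 / (3 * s₀) := min_le_right _ _
      have : m * ‖y‖ ≤ s⁻¹ * ‖y‖ := by
        apply mul_le_mul_of_nonneg_right _ hy0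
        calc m ≤ 2 / (3 * s₀) := hmle2
          _ = (3 * s₀ / 2)⁻¹ := h2.symm
          _ ≤ s⁻¹ := h1
      nlinarith
    have hrpow : (1 + ‖s⁻¹ • y‖) ^ (-(5:ℝ)) ≤ (m * (1 + ‖y‖)) ^ (-(5:ℝ)) := by
      apply Real.rpow_le_rpow_of_nonpos (by positivity) hmball (by norm_num)
    have hmul : (m * (1 + ‖y‖)) ^ (-(5:ℝ)) = m ^ (-(5:ℝ)) * (1 + ‖y‖) ^ (-(5:ℝ)) :=
      Real.mul_rpow hm0.le (by positivity)
    have hBy := hM y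
    have hs2inv : (s ^ 2)⁻¹ ≤ ((s₀/2) ^ 2)⁻¹ := by
      apply inv_anti₀ (by positivity)
      have := hs1
      nlinarith
    have h20 : ((s₀/2) ^ 2)⁻¹ = (2 / s₀)^2 := by rw [div_pow, div_pow, inv_div]
    have hnn1 : (0:ℝ) ≤ (1 + ‖y‖) ^ (-(5:ℝ)) := by positivity
    have hnn2 : (0:ℝ) ≤ ‖y‖ := norm_nonneg _
    have hnn3 : (0:ℝ) ≤ m ^ (-(5:ℝ)) := by positivity
    have hΦnn : (0:ℝ) ≤ ‖fderiv ℝ (⇑φ) (s⁻¹ • y)‖ := norm_nonneg _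
    have hchain : ‖fderiv ℝ (⇑φ) (s⁻¹ • y)‖ ≤ C * (m ^ (-(5:ℝ)) * (1 + ‖y‖) ^ (-(5:ℝ))) := by
      calc ‖fderiv ℝ (⇑φ) (s⁻¹ • y)‖ ≤ C * (1 + ‖s⁻¹ • y‖) ^ (-(5:ℝ)) := hΦb
        _ ≤ C * (m ^ (-(5:ℝ)) * (1 + ‖y‖) ^ (-(5:ℝ))) := by
            rw [← hmul]; exact mul_le_mul_of_nonneg_left hrpow hC.le
    calc ‖dot3 (B y) ((-(s ^ 2)⁻¹) • fderiv ℝ (⇑φ) (s⁻¹ • y) y)‖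
        ≤ ‖B y‖ * ‖(-(s ^ 2)⁻¹) • fderiv ℝ (⇑φ) (s⁻¹ • y) y‖ := hinner
      _ = ‖B y‖ * ((s ^ 2)⁻¹ * ‖fderiv ℝ (⇑φ) (s⁻¹ • y) y‖) := by rw [hnorm_smul]
      _ ≤ M * ((2/s₀) ^ 2 * (C * (m ^ (-(5:ℝ)) * (1 + ‖y‖) ^ (-(5:ℝ))) * ‖y‖)) := by
          have hBn : (0:ℝ) ≤ ‖B y‖ := norm_nonneg _
          have h1 : ‖fderiv ℝ (⇑φ) (s⁻¹ • y) y‖ ≤ C * (m ^ (-(5:ℝ)) * (1 + ‖y‖) ^ (-(5:ℝ))) * ‖y‖ := by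
            calc ‖fderiv ℝ (⇑φ) (s⁻¹ • y) y‖ ≤ ‖fderiv ℝ (⇑φ) (s⁻¹ • y)‖ * ‖y‖ := hop
              _ ≤ C * (m ^ (-(5:ℝ)) * (1 + ‖y‖) ^ (-(5:ℝ))) * ‖y‖ :=
                  mul_le_mul_of_nonneg_right hchain hnn2
          have hs2nn : (0:ℝ) ≤ (s^2)⁻¹ := by positivity
          have h2020 : (0:ℝ) ≤ (2/s₀)^2 := by positivity
          have hfn : (0:ℝ) ≤ ‖fderiv ℝ (⇑φ) (s⁻¹ • y) y‖ := norm_nonneg _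
          have hrhs : (0:ℝ) ≤ C * (m ^ (-(5:ℝ)) * (1 + ‖y‖) ^ (-(5:ℝ))) * ‖y‖ := by positivity
          have step1 : ‖B y‖ * ((s ^ 2)⁻¹ * ‖fderiv ℝ (⇑φ) (s⁻¹ • y) y‖)
              ≤ M * ((s ^ 2)⁻¹ * ‖fderiv ℝ (⇑φ) (s⁻¹ • y) y‖) := by
            apply mul_le_mul_of_nonneg_right hBy (by positivity)
          have step2 : (s ^ 2)⁻¹ * ‖fderiv ℝ (⇑φ) (s⁻¹ • y) y‖
              ≤ (2/s₀)^2 * (C * (m ^ (-(5:ℝ)) * (1 + ‖y‖) ^ (-(5:ℝ))) * ‖y‖) := by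
            calc (s ^ 2)⁻¹ * ‖fderiv ℝ (⇑φ) (s⁻¹ • y) y‖
                ≤ ((s₀/2) ^ 2)⁻¹ * ‖fderiv ℝ (⇑φ) (s⁻¹ • y) y‖ :=
                  mul_le_mul_of_nonneg_right hs2inv hfn
              _ = (2/s₀)^2 * ‖fderiv ℝ (⇑φ) (s⁻¹ • y) y‖ := by rw [h20]
              _ ≤ (2/s₀)^2 * (C * (m ^ (-(5:ℝ)) * (1 + ‖y‖) ^ (-(5:ℝ))) * ‖y‖) :=
                  mul_le_mul_of_nonneg_left h1 h2020
          calc ‖B y‖ * ((s ^ 2)⁻¹ * ‖fderiv ℝ (⇑φ) (s⁻¹ • y) y‖)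
              ≤ M * ((s ^ 2)⁻¹ * ‖fderiv ℝ (⇑φ) (s⁻¹ • y) y‖) := step1
            _ ≤ M * ((2/s₀)^2 * (C * (m ^ (-(5:ℝ)) * (1 + ‖y‖) ^ (-(5:ℝ))) * ‖y‖)) :=
                mul_le_mul_of_nonneg_left step2 hM0.le
      _ = bound y := by rw [hbound]; ring
  · -- integrability of bound
    have hint : Integrable (fun y : E3 => (1 + ‖y‖) ^ (-(4:ℝ))) volume := by
      apply integrable_one_add_norm (E := E3)
      rw [finrankE3]; norm_num
    refine Integrable.mono' (hint.const_mul (M * (2 / s₀) ^ 2 * (m ^ (-(5:ℝ)) * C)))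
      ?_ (Eventually.of_forall fun y => ?_)
    · refine Continuous.aestronglyMeasurable ?_
      apply Continuous.mul continuous_const
      exact (((continuous_const (y := (1:ℝ))).add continuous_norm).rpow_const (fun y => Or.inl (ne_of_gt (add_pos_of_pos_of_nonneg one_pos (norm_nonneg _))))).mul continuous_norm
    · rw [hbound]
      have hy : (0:ℝ) ≤ ‖y‖ := norm_nonneg _
      have h1 : (1 + ‖y‖) ^ (-(5:ℝ)) * ‖y‖ ≤ (1 + ‖y‖) ^ (-(4:ℝ)) := by
        have : (1 + ‖y‖) ^ (-(4:ℝ)) = (1 + ‖y‖) ^ (-(5:ℝ)) * (1 + ‖y‖) ^ (1:ℝ) := by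
          rw [← Real.rpow_add (by positivity)]; norm_num
        rw [this, Real.rpow_one]
        have h5 : (0:ℝ) ≤ (1 + ‖y‖) ^ (-(5:ℝ)) := by positivity
        nlinarith
      have hc0 : (0:ℝ) ≤ M * (2 / s₀) ^ 2 * (m ^ (-(5:ℝ)) * C) := by positivity
      have habs : ‖M * (2 / s₀) ^ 2 * (m ^ (-(5:ℝ)) * C) * ((1 + ‖y‖) ^ (-(5:ℝ)) * ‖y‖)‖
          = M * (2 / s₀) ^ 2 * (m ^ (-(5:ℝ)) * C) * ((1 + ‖y‖) ^ (-(5:ℝ)) * ‖y‖) := by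
        rw [Real.norm_eq_abs, abs_of_nonneg]; positivity
      rw [habs]
      exact mul_le_mul_of_nonneg_left h1 hc0
  · -- differentiability
    refine Eventually.of_forall fun y => fun s hsball => ?_
    have hsd : |s - s₀| < s₀ / 2 := by
      rw [Metric.mem_ball, Real.dist_eq] at hsball; exact hsball
    have hs1 : s₀ / 2 < s := by cases' abs_lt.mp hsd with h1 h2; linarith
    have hspos : 0 < s := lt_trans (by positivity) hs1
    have hinv : HasDerivAt (fun u : ℝ => u⁻¹) (-(s ^ 2)⁻¹) s := hasDerivAt_inv hspos.ne'
    have hsm : HasDerivAt (fun t : ℝ => t • y) y s⁻¹ := by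
      simpa using (hasDerivAt_id (s⁻¹ : ℝ)).smul_const y
    have hφd : HasFDerivAt (⇑φ) (fderiv ℝ (⇑φ) (s⁻¹ • y)) (s⁻¹ • y) :=
      (φ.differentiable.differentiableAt).hasFDerivAt
    have hcomp1 : HasDerivAt (fun t : ℝ => φ (t • y)) (fderiv ℝ (⇑φ) (s⁻¹ • y) y) s⁻¹ :=
      hφd.comp_hasDerivAt s⁻¹ hsm
    have hcomp2 : HasDerivAt (fun u : ℝ => φ (u⁻¹ • y))
        ((-(s ^ 2)⁻¹) • fderiv ℝ (⇑φ) (s⁻¹ • y) y) s :=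
      hcomp1.scomp s hinv
    have hfinal := (hasDerivAt_const s (B y)).inner ℝ hcomp2
    simpa [dot3] using hfinal

lemma hasDerivAt_K (hBc : Continuous B) (hM : ∀ x, ‖B x‖ ≤ M) (hM0 : 0 < M)
    {s : ℝ} (hs : 0 < s) :
    HasDerivAt (Kf B φ) (-((3 * Kf B φ s + Lf B φ s) / s)) s := by
  have hJ := hasDerivAt_J φ hBc hM hM0 hs
  have hpow : HasDerivAt (fun u : ℝ => ((u : ℝ) ^ 3)⁻¹) (-(3 * s ^ 2) / (s ^ 3) ^ 2) s := by
    have h1 : HasDerivAt (fun u : ℝ => (u : ℝ) ^ 3) (3 * s ^ 2) s := by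
      simpa using hasDerivAt_pow 3 s
    exact h1.inv (by positivity)
  have hmul := hpow.mul hJ
  have heq : (fun u : ℝ => ((u:ℝ) ^ 3)⁻¹ * Jf B φ u) =ᶠ[𝓝 s] Kf B φ := by
    filter_upwards [Ioi_mem_nhds hs] with u hu
    exact (K_eq_J φ hu).symm
  have hfinal := hmul.congr_of_eventuallyEq heq.symm
  refine hfinal.congr_deriv ?_
  have hKs := K_eq_J (B := B) φ hs
  have hs3 : (s:ℝ)^3 ≠ 0 := by positivity
  rw [hKs]
  field_simp
  ring
end deriv

-- === from t7 ===
set_option maxHeartbeats 1000000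
section assemble
variable {B : E3 → E3} {M : ℝ} (φ : SchwartzMap E3 E3)

lemma FTC_step (hBc : Continuous B) (hM : ∀ x, ‖B x‖ ≤ M) (hM0 : 0 < M) :
    ∫ s in (0:ℝ)..1, (-(s * (Kf B φ s + Lf B φ s))) = Kf B φ 1 := by
  set F : ℝ → ℝ := fun s => s ^ 2 * Kf B φ s with hF
  have hcont : ContinuousOn F (Set.Icc 0 1) :=
    ((continuous_pow 2).mul (cont_K φ hBc hM)).continuousOn
  have hderiv : ∀ s ∈ Set.Ioo (0:ℝ) 1, HasDerivWithinAt F (-(s * (Kf B φ s + Lf B φ s))) (Set.Ioi s) s := by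
    intro s hs
    have hK := hasDerivAt_K φ hBc hM hM0 hs.1
    have hp : HasDerivAt (fun u : ℝ => u ^ 2) (2 * s ^ 1) s := hasDerivAt_pow 2 s
    have hmul := hp.mul hK
    have : 2 * s ^ 1 * Kf B φ s + s ^ 2 * -((3 * Kf B φ s + Lf B φ s) / s)
        = -(s * (Kf B φ s + Lf B φ s)) := by
      have hsne : s ≠ 0 := ne_of_gt hs.1
      field_simp
      ring
    rw [this] at hmul
    exact hmul.hasDerivWithinAt
  have hint : IntervalIntegrable (fun s => -(s * (Kf B φ s + Lf B φ s))) volume 0 1 :=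
    ((continuous_id.mul ((cont_K φ hBc hM).add (cont_L φ hBc hM))).neg).intervalIntegrable 0 1
  have := intervalIntegral.integral_eq_sub_of_hasDeriv_right_of_le zero_le_one hcont hderiv hint
  rw [this, hF]
  norm_num

lemma continuous_into_E3 {X : Type*} [TopologicalSpace X] {f : X → E3}
    (h : ∀ i, Continuous fun x => f x i) : Continuous f := by
  have h2 : Continuous fun (x : X) (i : Fin 3) => f x i := continuous_pi h
  exact ((EuclideanSpace.equiv (Fin 3) ℝ).symm.continuous).comp h2

lemma cont_pderiv3 (i k : Fin 3) : Continuous (pderiv3 (⇑φ) i k) := by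
  have h1 : Continuous fun x => fderiv ℝ (⇑φ) x (EuclideanSpace.single i 1) :=
    (cont_fderiv_phi φ).clm_apply continuous_const
  exact (EuclideanSpace.proj (𝕜 := ℝ) k).continuous.comp h1

lemma cont_curl3 : Continuous (curl3 (⇑φ)) := by
  apply continuous_into_E3
  intro i
  fin_cases i
  · exact ((cont_pderiv3 φ 1 2).sub (cont_pderiv3 φ 2 1))
  · exact ((cont_pderiv3 φ 2 0).sub (cont_pderiv3 φ 0 2))
  · exact ((cont_pderiv3 φ 0 1).sub (cont_pderiv3 φ 1 0))

lemma cont_w : Continuous fun x => cross3 x (curl3 (⇑φ) x) := by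
  apply continuous_into_E3
  intro i
  have hc := cont_curl3 φ
  have hxj : ∀ j : Fin 3, Continuous fun x : E3 => x j := fun j =>
    (EuclideanSpace.proj (𝕜 := ℝ) j).continuous
  have hcj : ∀ j : Fin 3, Continuous fun x : E3 => curl3 (⇑φ) x j := fun j =>
    (EuclideanSpace.proj (𝕜 := ℝ) j).continuous.comp hc
  fin_cases i
  · exact ((hxj 1).mul (hcj 2)).sub ((hxj 2).mul (hcj 1))
  · exact ((hxj 2).mul (hcj 0)).sub ((hxj 0).mul (hcj 2))
  · exact ((hxj 0).mul (hcj 1)).sub ((hxj 1).mul (hcj 0))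

lemma abs_pderiv3_le (i k : Fin 3) (x : E3) : |pderiv3 (⇑φ) i k x| ≤ ‖fderiv ℝ (⇑φ) x‖ := by
  have h1 : |pderiv3 (⇑φ) i k x| ≤ ‖fderiv ℝ (⇑φ) x (EuclideanSpace.single i 1)‖ :=
    abs_apply_le_norm _ k
  have h2 : ‖fderiv ℝ (⇑φ) x (EuclideanSpace.single i 1)‖ ≤ ‖fderiv ℝ (⇑φ) x‖ := by
    have := (fderiv ℝ (⇑φ) x).le_opNorm (EuclideanSpace.single i (1:ℝ))
    rwa [EuclideanSpace.norm_single, norm_one, mul_one] at this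
  exact le_trans h1 h2

lemma norm_curl3_le (x : E3) : ‖curl3 (⇑φ) x‖ ≤ 6 * ‖fderiv ℝ (⇑φ) x‖ := by
  have h := norm3_le (curl3 (⇑φ) x)
  have e0 : curl3 (⇑φ) x 0 = pderiv3 (⇑φ) 1 2 x - pderiv3 (⇑φ) 2 1 x := rfl
  have e1 : curl3 (⇑φ) x 1 = pderiv3 (⇑φ) 2 0 x - pderiv3 (⇑φ) 0 2 x := rfl
  have e2 : curl3 (⇑φ) x 2 = pderiv3 (⇑φ) 0 1 x - pderiv3 (⇑φ) 1 0 x := rfl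
  rw [e0, e1, e2] at h
  have b : ∀ i k i' k', |pderiv3 (⇑φ) i k x - pderiv3 (⇑φ) i' k' x|
      ≤ 2 * ‖fderiv ℝ (⇑φ) x‖ := by
    intro i k i' k'
    have := abs_pderiv3_le φ i k x
    have := abs_pderiv3_le φ i' k' x
    have habs := abs_sub (pderiv3 (⇑φ) i k x) (pderiv3 (⇑φ) i' k' x)
    linarith
  have := b 1 2 2 1
  have := b 2 0 0 2
  have := b 0 1 1 0
  linarith

lemma norm_w_le (x : E3) :
    ‖cross3 x (curl3 (⇑φ) x)‖ ≤ 36 * (‖x‖ * ‖fderiv ℝ (⇑φ) x‖) := by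
  have h1 := norm_cross3_le x (curl3 (⇑φ) x)
  have h2 := norm_curl3_le φ x
  have hx : (0:ℝ) ≤ ‖x‖ := norm_nonneg _
  nlinarith [norm_nonneg (curl3 (⇑φ) x), norm_nonneg (fderiv ℝ (⇑φ) x)]

lemma ptA (hBc : Continuous B) (x : E3) :
    dot3 (transversalGauge B x) (curl3 (⇑φ) x)
      = ∫ s in (0:ℝ)..1, s * dot3 (B (s • x)) (cross3 x (curl3 (⇑φ) x)) := by
  set c := curl3 (⇑φ) x
  set w := cross3 x c with hw
  have h1 : dot3 (transversalGauge B x) c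
      = dot3 (∫ s in (0:ℝ)..1, s • B (s • x)) w := by
    rw [transversalGauge, dot3_neg_cross, hw]
  rw [h1]
  have hint : IntervalIntegrable (fun s => s • B (s • x)) volume 0 1 :=
    (continuous_id.smul (hBc.comp (continuous_id.smul continuous_const))).intervalIntegrable 0 1
  have h2 := (innerSL ℝ w).intervalIntegral_comp_comm hint (a := 0) (b := 1)
  have h3 : dot3 (∫ s in (0:ℝ)..1, s • B (s • x)) w
      = (innerSL ℝ w) (∫ s in (0:ℝ)..1, s • B (s • x)) := by
    rw [dot3, real_inner_comm]; rfl
  rw [h3, ← h2]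
  congr 1
  funext s
  rw [innerSL_apply_apply, real_inner_smul_right, real_inner_comm]
  rfl

lemma swap_step (hBc : Continuous B) (hM : ∀ x, ‖B x‖ ≤ M) (hM0 : 0 < M) :
    ∫ x, ∫ s in Set.Ioc (0:ℝ) 1, s * dot3 (B (s • x)) (cross3 x (curl3 (⇑φ) x))
      = ∫ s in Set.Ioc (0:ℝ) 1, ∫ x, s * dot3 (B (s • x)) (cross3 x (curl3 (⇑φ) x)) := by
  apply MeasureTheory.integral_integral_swap
  set Φ := SchwartzMap.fderivCLM ℝ E3 E3 φ with hΦ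
  have hcont : Continuous fun p : E3 × ℝ => p.2 * dot3 (B (p.2 • p.1)) (cross3 p.1 (curl3 (⇑φ) p.1)) := by
    apply continuous_snd.mul
    apply Continuous.inner
    · exact hBc.comp (continuous_snd.smul continuous_fst)
    · exact (cont_w φ).comp continuous_fst
  have hg1 : Integrable (fun x : E3 => M * (36 * (‖x‖ ^ 1 * ‖Φ x‖))) volume :=
    ((Φ.integrable_pow_mul (μ := volume) 1).const_mul 36).const_mul M
  have hg2 : Integrable (fun s : ℝ => |s|) (volume.restrict (Set.Ioc 0 1)) :=
    (continuous_abs.integrableOn_Ioc (a := (0:ℝ)) (b := 1))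
  have hprod := hg1.mul_prod hg2
  refine Integrable.mono' hprod (hcont.aestronglyMeasurable) (Eventually.of_forall fun p => ?_)
  obtain ⟨x, s⟩ := p
  simp only [Function.uncurry]
  have hd := abs_dot3_le (B (s • x)) (cross3 x (curl3 (⇑φ) x))
  have hBn := hM (s • x)
  have hwle := norm_w_le φ x
  have h0 : |s * dot3 (B (s • x)) (cross3 x (curl3 (⇑φ) x))|
      ≤ |s| * (‖B (s • x)‖ * ‖cross3 x (curl3 (⇑φ) x)‖) := by
    rw [abs_mul]
    exact mul_le_mul_of_nonneg_left hd (abs_nonneg s)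
  have h1 : ‖B (s • x)‖ * ‖cross3 x (curl3 (⇑φ) x)‖ ≤ M * (36 * (‖x‖ ^ 1 * ‖Φ x‖)) := by
    have hΦx : ‖cross3 x (curl3 (⇑φ) x)‖ ≤ 36 * (‖x‖ * ‖fderiv ℝ (⇑φ) x‖) := hwle
    have hEq : ‖fderiv ℝ (⇑φ) x‖ = ‖Φ x‖ := by rw [hΦ, SchwartzMap.fderivCLM_apply]
    rw [hEq] at hΦx
    have hBnn : (0:ℝ) ≤ ‖B (s • x)‖ := norm_nonneg _
    have hwnn : (0:ℝ) ≤ ‖cross3 x (curl3 (⇑φ) x)‖ := norm_nonneg _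
    have h36 : (0:ℝ) ≤ 36 * (‖x‖ * ‖Φ x‖) := by positivity
    calc ‖B (s • x)‖ * ‖cross3 x (curl3 (⇑φ) x)‖
        ≤ M * ‖cross3 x (curl3 (⇑φ) x)‖ := mul_le_mul_of_nonneg_right hBn hwnn
      _ ≤ M * (36 * (‖x‖ * ‖Φ x‖)) := mul_le_mul_of_nonneg_left hΦx hM0.le
      _ = M * (36 * (‖x‖ ^ 1 * ‖Φ x‖)) := by rw [pow_one]
  calc ‖s * dot3 (B (s • x)) (cross3 x (curl3 (⇑φ) x))‖
      = |s * dot3 (B (s • x)) (cross3 x (curl3 (⇑φ) x))| := rfl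
    _ ≤ |s| * (‖B (s • x)‖ * ‖cross3 x (curl3 (⇑φ) x)‖) := h0
    _ ≤ |s| * (M * (36 * (‖x‖ ^ 1 * ‖Φ x‖))) := by
        exact mul_le_mul_of_nonneg_left h1 (abs_nonneg s)
    _ = M * (36 * (‖x‖ ^ 1 * ‖Φ x‖)) * |s| := by ring

theorem main_assembly (hBc : Continuous B) (hM : ∀ x, ‖B x‖ ≤ M) (hM0 : 0 < M)
    (hdiv : DivFreeS' B) :
    (∫ x, dot3 (transversalGauge B x) (curl3 (⇑φ) x)) = ∫ x, dot3 (B x) (φ x) := by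
  have step1 : (∫ x, dot3 (transversalGauge B x) (curl3 (⇑φ) x))
      = ∫ x, ∫ s in Set.Ioc (0:ℝ) 1, s * dot3 (B (s • x)) (cross3 x (curl3 (⇑φ) x)) := by
    congr 1; funext x
    rw [ptA φ hBc x, intervalIntegral.integral_of_le zero_le_one]
  rw [step1, swap_step φ hBc hM hM0]
  have step2 : (∫ s in Set.Ioc (0:ℝ) 1, ∫ x, s * dot3 (B (s • x)) (cross3 x (curl3 (⇑φ) x)))
      = ∫ s in Set.Ioc (0:ℝ) 1, (-(s * (Kf B φ s + Lf B φ s))) := by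
    apply setIntegral_congr_fun measurableSet_Ioc
    intro s hs
    simp only
    rw [MeasureTheory.integral_const_mul, inner_int φ hBc hM hdiv (ne_of_gt hs.1)]
    ring
  rw [step2, ← intervalIntegral.integral_of_le zero_le_one, FTC_step φ hBc hM hM0]
  unfold Kf
  congr 1; funext x; rw [one_smul]

end assemble

/-- The transversal gauge is a distributional vector potential for `B`
(Proposition Ptg.2). -/
theorem statement2 (B : E3 → E3) (hBc : Continuous B) (hBmd : IsMediumDecay B) :
    CurlEqS' (transversalGauge B) B := by
  obtain ⟨-, hdec, hdiv⟩ := hBmd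
  obtain ⟨M, hM0, hM⟩ := bounded_of_decay hBc hdec
  exact fun φ => main_assembly φ hBc hM hM0 hdiv
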